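/- Let X be a finite set with |X| > 2, let ε > 0, let W be a finite nonempty action set, and let ℓ : W → X → ℝ be strictly monotone with respect to some metric d on X, i.e. there exist a bijection α : W → X and a strictly increasing function m : ℝ → ℝ such that ℓ w x = m (d (α w) x) for all w, x. Then there is no ε·d_D-private channel on X that is universally ℓ-optimal within the ε·d_D-privacy type (where d_D is the discrete metric). -/

import Mathlib

open Finset

/-- A channel from `X` to `Y`: nonnegative entries and each row sums to 1. -/
def IsChannel {X Y : Type} [Fintype Y] (M : X → Y → ℝ) : Prop :=
  (∀ x y, 0 ≤ M x y) ∧ ∀ x, ∑ y, M x y = 1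

/-- The `ε·d_D`-privacy constraints (discrete metric). -/
def IsPrivateD {X Y : Type} (ε : ℝ) (M : X → Y → ℝ) : Prop :=
  ∀ x x' y, x ≠ x' → M x y ≤ Real.exp ε * M x' y

/-- `d` is a metric on `X`. -/
def IsMetric {X : Type} (d : X → X → ℝ) : Prop :=
  (∀ x, d x x = 0) ∧ (∀ x x' : X, x ≠ x' → 0 < d x x') ∧
    (∀ x x', d x x' = d x' x) ∧ ∀ x y z, d x z ≤ d x y + d y z

/-- A prior on `X`. -/
def IsPrior {X : Type} [Fintype X] (π : X → ℝ) : Prop :=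
  (∀ x, 0 ≤ π x) ∧ ∑ x, π x = 1

/-- Posterior expected loss `U_ℓ[π⟩M]`. -/
noncomputable def postLoss {X Y W : Type} [Fintype X] [Fintype Y] [Fintype W] [Nonempty W]
    (π : X → ℝ) (M : X → Y → ℝ) (ℓ : W → X → ℝ) : ℝ :=
  ∑ y, Finset.univ.inf' Finset.univ_nonempty fun w => ∑ x, π x * M x y * ℓ w x

/-- Universal `ℓ`-optimality within the `ε·d_D`-privacy type. -/
def UnivOptimalD {X W Y : Type} [Fintype X] [Fintype W] [Nonempty W] [Fintype Y]
    (ε : ℝ) (M : X → Y → ℝ) (ℓ : W → X → ℝ) : Prop :=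
  ∀ (Y' : Type) [Fintype Y'] [Nonempty Y'] (M' : X → Y' → ℝ),
    IsChannel M' → IsPrivateD ε M' →
      ∀ π : X → ℝ, IsPrior π → postLoss π M ℓ ≤ postLoss π M' ℓ

namespace NoUO

lemma inf'_add_const {W : Type} [Fintype W] [Nonempty W] (f : W → ℝ) (c : ℝ) :
    univ.inf' univ_nonempty (fun w => f w + c) = univ.inf' univ_nonempty f + c := by
  apply le_antisymm
  · obtain ⟨w, -, hw⟩ := Finset.exists_mem_eq_inf' (univ_nonempty) f
    calc univ.inf' univ_nonempty (fun w => f w + c) ≤ f w + c :=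
          Finset.inf'_le _ (mem_univ w)
      _ = _ := by rw [hw]
  · exact Finset.le_inf' _ _ fun w _ => add_le_add_left (Finset.inf'_le _ (mem_univ w)) c

noncomputable def G {W X : Type} [Fintype W] [Nonempty W]
    (ℓ : W → X → ℝ) (C : ℝ) (x1 x2 : X) (u v : ℝ) : ℝ :=
  univ.inf' univ_nonempty fun w => u * (ℓ w x1 - C) + v * (ℓ w x2 - C)

variable {W X : Type} [Fintype W] [Nonempty W] (ℓ : W → X → ℝ) (C : ℝ) (x1 x2 : X)

lemma G_le (w : W) (u v : ℝ) :
    G ℓ C x1 x2 u v ≤ u * (ℓ w x1 - C) + v * (ℓ w x2 - C) :=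
  Finset.inf'_le _ (mem_univ w)

lemma G_smul {c : ℝ} (hc : 0 ≤ c) (u v : ℝ) :
    G ℓ C x1 x2 (c * u) (c * v) = c * G ℓ C x1 x2 u v := by
  apply le_antisymm
  · obtain ⟨w, -, hw⟩ := Finset.exists_mem_eq_inf' (univ_nonempty (α := W))
      (fun w => u * (ℓ w x1 - C) + v * (ℓ w x2 - C))
    calc G ℓ C x1 x2 (c * u) (c * v) ≤ (c*u) * (ℓ w x1 - C) + (c*v) * (ℓ w x2 - C) :=
          G_le ℓ C x1 x2 w _ _
      _ = c * (u * (ℓ w x1 - C) + v * (ℓ w x2 - C)) := by ring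
      _ = c * G ℓ C x1 x2 u v := by rw [← hw]; rfl
  · apply Finset.le_inf'
    intro w _
    calc c * G ℓ C x1 x2 u v ≤ c * (u * (ℓ w x1 - C) + v * (ℓ w x2 - C)) :=
          mul_le_mul_of_nonneg_left (G_le ℓ C x1 x2 w u v) hc
      _ = (c*u) * (ℓ w x1 - C) + (c*v) * (ℓ w x2 - C) := by ring

lemma G_superadd {l μ : ℝ} (hl : 0 ≤ l) (hμ : 0 ≤ μ) (u1 v1 u2 v2 : ℝ) :
    l * G ℓ C x1 x2 u1 v1 + μ * G ℓ C x1 x2 u2 v2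
      ≤ G ℓ C x1 x2 (l*u1 + μ*u2) (l*v1 + μ*v2) := by
  apply Finset.le_inf'
  intro w _
  have h1 := mul_le_mul_of_nonneg_left (G_le ℓ C x1 x2 w u1 v1) hl
  have h2 := mul_le_mul_of_nonneg_left (G_le ℓ C x1 x2 w u2 v2) hμ
  calc l * G ℓ C x1 x2 u1 v1 + μ * G ℓ C x1 x2 u2 v2
      ≤ l * (u1 * (ℓ w x1 - C) + v1 * (ℓ w x2 - C))
        + μ * (u2 * (ℓ w x1 - C) + v2 * (ℓ w x2 - C)) := add_le_add h1 h2
    _ = (l*u1 + μ*u2) * (ℓ w x1 - C) + (l*v1 + μ*v2) * (ℓ w x2 - C) := by ring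

lemma G_interior {l μ : ℝ} (hl : 0 < l) (hμ : 0 < μ) {u1 v1 u2 v2 : ℝ}
    (heq : G ℓ C x1 x2 (l*u1 + μ*u2) (l*v1 + μ*v2)
      = l * G ℓ C x1 x2 u1 v1 + μ * G ℓ C x1 x2 u2 v2) :
    G ℓ C x1 x2 (u1 + u2) (v1 + v2) = G ℓ C x1 x2 u1 v1 + G ℓ C x1 x2 u2 v2 := by
  set G1 := G ℓ C x1 x2 u1 v1
  set G2 := G ℓ C x1 x2 u2 v2
  have h1 : G1 + G2 ≤ G ℓ C x1 x2 (u1 + u2) (v1 + v2) := by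
    have := G_superadd ℓ C x1 x2 (zero_le_one) (zero_le_one) u1 v1 u2 v2
    simpa using this
  by_contra hne
  have h2 : G1 + G2 < G ℓ C x1 x2 (u1 + u2) (v1 + v2) := lt_of_le_of_ne h1 (Ne.symm hne)
  set ν := min l μ with hνdef
  have hν : 0 < ν := lt_min hl hμ
  have hlν : 0 ≤ l - ν := by simp [hνdef, min_le_left]
  have hμν : 0 ≤ μ - ν := by simp [hνdef, min_le_right]
  have key : ν * G ℓ C x1 x2 (u1+u2) (v1+v2) + ((l-ν) * G1 + (μ-ν) * G2)
      ≤ G ℓ C x1 x2 (l*u1 + μ*u2) (l*v1 + μ*v2) := by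
    have hstep2 : (l-ν) * G1 + (μ-ν) * G2
        ≤ G ℓ C x1 x2 ((l-ν)*u1 + (μ-ν)*u2) ((l-ν)*v1 + (μ-ν)*v2) :=
      G_superadd ℓ C x1 x2 hlν hμν u1 v1 u2 v2
    have hstep1 : ν * G ℓ C x1 x2 (u1+u2) (v1+v2)
        + 1 * G ℓ C x1 x2 ((l-ν)*u1 + (μ-ν)*u2) ((l-ν)*v1 + (μ-ν)*v2)
        ≤ G ℓ C x1 x2 (ν*(u1+u2) + 1*((l-ν)*u1 + (μ-ν)*u2))
            (ν*(v1+v2) + 1*((l-ν)*v1 + (μ-ν)*v2)) :=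
      G_superadd ℓ C x1 x2 (le_of_lt hν) zero_le_one _ _ _ _
    have harg1 : ν*(u1+u2) + 1*((l-ν)*u1 + (μ-ν)*u2) = l*u1 + μ*u2 := by ring
    have harg2 : ν*(v1+v2) + 1*((l-ν)*v1 + (μ-ν)*v2) = l*v1 + μ*v2 := by ring
    rw [harg1, harg2] at hstep1
    nlinarith [hstep1, hstep2]
  have hstrict : ν * (G1 + G2) < ν * G ℓ C x1 x2 (u1+u2) (v1+v2) :=
    mul_lt_mul_of_pos_left h2 hν
  nlinarith [key, heq, hstrict]

lemma no_funeq (e K : ℝ) (he : 1 < e) (f : ℝ → ℝ)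
    (hf0 : ∀ r, 0 < r → 0 ≤ f r) (hfK : ∀ r, 0 < r → f r ≤ K)
    (hflin : ∀ r, 0 < r → f r ≤ r * K) (hf1 : 0 < f 1)
    (heq : ∀ r, 0 < r → f (e * r) + e * f (r / e) = (1 + e) * f r) : False := by
  have he0 : (0:ℝ) < e := lt_trans one_pos he
  set φ : ℤ → ℝ := fun n => f (e ^ n) with hφ
  have hpow : ∀ n : ℤ, (0:ℝ) < e ^ n := fun n => zpow_pos he0 n
  set D : ℤ → ℝ := fun n => φ n - φ (n - 1) with hD
  have hrec : ∀ n : ℤ, D (n + 1) = e * D n := by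
    intro n
    have h := heq (e ^ n) (hpow n)
    have h1 : e * e ^ n = e ^ (n + 1) := by
      rw [zpow_add₀ (ne_of_gt he0)]; rw [zpow_one]; ring
    have h2 : e ^ n / e = e ^ (n - 1) := by
      rw [zpow_sub₀ (ne_of_gt he0)]; simp
    rw [h1, h2] at h
    simp only [hD, hφ]
    have : (n : ℤ) + 1 - 1 = n := by ring
    rw [this]
    nlinarith [h]
  have hDiter : ∀ (n : ℤ) (k : ℕ), D (n + k) = e ^ k * D n := by
    intro n k
    induction k with
    | zero => simp
    | succ k ih =>
      have hcast : ((k+1 : ℕ) : ℤ) = (k : ℤ) + 1 := by push_cast; ring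
      rw [hcast, ← add_assoc, hrec, ih, pow_succ]; ring
  have hφ0 : φ 0 = f 1 := by simp [hφ]
  by_cases hcase : ∀ n : ℤ, n ≤ 0 → D n ≤ 0
  · have hmono : ∀ k : ℕ, φ 0 ≤ φ (-(k:ℤ)) := by
      intro k
      induction k with
      | zero => simp
      | succ k ih =>
        have hd := hcase (-(k:ℤ)) (by simp)
        have : φ (-(k:ℤ)) - φ (-(k:ℤ) - 1) ≤ 0 := hd
        have he' : (-(↑(k+1):ℤ)) = -(k:ℤ) - 1 := by push_cast; ring
        rw [he']
        linarith
    obtain ⟨k, hk⟩ := pow_unbounded_of_one_lt (K / f 1) he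
    have hφk : φ (-(k:ℤ)) ≤ e ^ (-(k:ℤ)) * K := by
      have := hflin (e ^ (-(k:ℤ))) (hpow _)
      simpa [hφ] using this
    have hez : (e:ℝ) ^ (-(k:ℤ)) = 1 / e ^ k := by
      rw [zpow_neg]; simp [zpow_natCast]
    have hfin : e ^ (-(k:ℤ)) * K < f 1 := by
      rw [hez]
      rw [div_lt_iff₀ hf1] at hk
      have hek : (0:ℝ) < e ^ k := pow_pos he0 k
      rw [div_mul_eq_mul_div, div_lt_iff₀ hek]
      nlinarith [hk, hf1, hek]
    have := hmono k
    rw [hφ0] at this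
    linarith
  · push_neg at hcase
    obtain ⟨n0, hn0le, hn0⟩ := hcase
    have hDbound : ∀ n : ℤ, D n ≤ K := by
      intro n
      have h1 : φ n ≤ K := hfK _ (hpow n)
      have h2 : 0 ≤ φ (n - 1) := hf0 _ (hpow _)
      simp only [hD]; linarith
    obtain ⟨k, hk⟩ := pow_unbounded_of_one_lt (K / D n0) he
    have hek : (0:ℝ) < e ^ k := pow_pos he0 k
    have : K < e ^ k * D n0 := by
      rw [div_lt_iff₀ hn0] at hk
      nlinarith
    have := hDiter n0 k
    have hb := hDbound (n0 + k)
    linarith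

/-- two-point prior -/
noncomputable def pr {X : Type} [DecidableEq X] (a b : X) (p q : ℝ) : X → ℝ :=
  fun x => if x = a then p else if x = b then q else 0

lemma pr_prior [Fintype X] [DecidableEq X] {a b : X} (hab : a ≠ b) {p q : ℝ}
    (hp : 0 ≤ p) (hq : 0 ≤ q) (hpq : p + q = 1) : IsPrior (pr a b p q) := by
  constructor
  · intro x
    unfold pr
    split <;> [skip; split] <;> simp [hp, hq]
  · have hsplit : ∀ x : X, pr a b p q x
        = (if x = a then p else 0) + (if x = b then q else 0) := by
      intro x
      unfold pr
      by_cases h1 : x = a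
      · subst h1
        simp [hab]
      · simp [h1]
    rw [Finset.sum_congr rfl fun x _ => hsplit x, Finset.sum_add_distrib]
    simp only [Finset.sum_ite_eq', Finset.mem_univ, if_true]
    exact hpq

lemma sum_pr [Fintype X] [DecidableEq X] {a b : X} (hab : a ≠ b) (p q : ℝ) (f : X → ℝ) :
    ∑ x, pr a b p q x * f x = p * f a + q * f b := by
  have hsplit : ∀ x : X, pr a b p q x * f x
      = (if x = a then p * f a else 0) + (if x = b then q * f b else 0) := by
    intro x
    unfold pr
    by_cases h1 : x = a
    · subst h1; simp [hab]
    · by_cases h2 : x = b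
      · subst h2; simp [h1]
      · simp [h1, h2]
  rw [Finset.sum_congr rfl fun x _ => hsplit x, Finset.sum_add_distrib]
  simp

lemma postLoss_pair [Fintype X] [DecidableEq X] {Y : Type} [Fintype Y]
    {a b : X} (hab : a ≠ b) {p q : ℝ}
    (hpq : p + q = 1) (N : X → Y → ℝ) (hN : ∀ x, ∑ y, N x y = 1) :
    postLoss (pr a b p q) N ℓ
      = (∑ y, G ℓ C a b (p * N a y) (q * N b y)) + C := by
  unfold postLoss
  have hy : ∀ y : Y, (Finset.univ.inf' Finset.univ_nonempty
        fun w => ∑ x, pr a b p q x * N x y * ℓ w x)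
      = G ℓ C a b (p * N a y) (q * N b y) + C * (p * N a y + q * N b y) := by
    intro y
    have hcol : ∀ w : W, (∑ x, pr a b p q x * N x y * ℓ w x)
        = (p * N a y * (ℓ w a - C) + q * N b y * (ℓ w b - C))
          + C * (p * N a y + q * N b y) := by
      intro w
      calc (∑ x, pr a b p q x * N x y * ℓ w x)
          = ∑ x, pr a b p q x * (N x y * ℓ w x) := by
            exact Finset.sum_congr rfl fun x _ => by ring
        _ = p * (N a y * ℓ w a) + q * (N b y * ℓ w b) :=
            sum_pr hab p q (fun x => N x y * ℓ w x)
        _ = (p * N a y * (ℓ w a - C) + q * N b y * (ℓ w b - C))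
              + C * (p * N a y + q * N b y) := by ring
    rw [show (fun w => ∑ x, pr a b p q x * N x y * ℓ w x)
        = fun w => (p * N a y * (ℓ w a - C) + q * N b y * (ℓ w b - C))
          + C * (p * N a y + q * N b y) from funext hcol]
    exact inf'_add_const _ _
  rw [Finset.sum_congr rfl fun y _ => hy y, Finset.sum_add_distrib]
  congr 1
  rw [← Finset.mul_sum]
  have : (∑ y, (p * N a y + q * N b y)) = 1 := by
    rw [Finset.sum_add_distrib, ← Finset.mul_sum, ← Finset.mul_sum, hN, hN]
    simpa using hpq
  rw [this, mul_one]

/-- randomized response channel on the pair; all other rows equal the second row. -/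
noncomputable def RR {X : Type} [DecidableEq X] (e : ℝ) (a : X) : X → Bool → ℝ :=
  fun x y => (if x = a then (if y then e else 1) else (if y then 1 else e)) / (1 + e)

lemma RR_sum {X : Type} [DecidableEq X] {e : ℝ} (he : 0 < e) (a : X) :
    ∀ x, ∑ y, RR e a x y = 1 := by
  intro x
  rw [Fintype.sum_bool]
  unfold RR
  by_cases h : x = a <;> simp [h] <;> field_simp <;> ring

lemma RR_channel {X : Type} [DecidableEq X] {e : ℝ} (he : 1 < e) (a : X) :
    IsChannel (RR e a) := by
  have h0 : (0:ℝ) < 1 + e := by linarith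
  refine ⟨?_, RR_sum (by linarith) a⟩
  intro x y
  unfold RR
  apply div_nonneg _ (le_of_lt h0)
  split <;> split <;> linarith

lemma RR_private {X : Type} [DecidableEq X] {ε : ℝ} (hε : 0 < ε) (a : X) :
    IsPrivateD ε (RR (Real.exp ε) a) := by
  set e := Real.exp ε with hedef
  have he : 1 < e := by
    have := Real.exp_lt_exp.2 hε
    rwa [Real.exp_zero] at this
  have h0 : (0:ℝ) < 1 + e := by linarith
  intro x x' y _
  have key : ∀ v1 v2 : ℝ, v1 ≤ e * v2 → v1 / (1+e) ≤ e * (v2 / (1+e)) := by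
    intro v1 v2 h
    rw [mul_div_assoc']
    gcongr
  apply key
  split_ifs <;> nlinarith [he]

lemma postLoss_RR [Fintype X] [DecidableEq X] {a b : X} (hab : a ≠ b)
    {p q e : ℝ} (he : 0 < e) (hpq : p + q = 1) :
    postLoss (pr a b p q) (RR e a) ℓ
      = (1/(1+e)) * (G ℓ C a b (p*e) q + G ℓ C a b p (q*e)) + C := by
  have h0 : (0:ℝ) < 1 + e := by linarith
  rw [postLoss_pair ℓ C hab hpq (RR e a) (RR_sum he a)]
  congr 1
  rw [Fintype.sum_bool]
  have hv1 : RR e a a true = e / (1+e) := by simp [RR]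
  have hv2 : RR e a a false = 1 / (1+e) := by simp [RR]
  have hv3 : RR e a b true = 1 / (1+e) := by simp [RR, hab.symm]
  have hv4 : RR e a b false = e / (1+e) := by simp [RR, hab.symm]
  rw [hv1, hv2, hv3, hv4]
  have e1 : p * (e/(1+e)) = (1/(1+e)) * (p*e) := by ring
  have e2 : q * (1/(1+e)) = (1/(1+e)) * q := by ring
  have e3 : p * (1/(1+e)) = (1/(1+e)) * p := by ring
  have e4 : q * (e/(1+e)) = (1/(1+e)) * (q*e) := by ring
  rw [e1, e2, e3, e4, G_smul ℓ C a b (by positivity), G_smul ℓ C a b (by positivity)]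
  ring

end NoUO

set_option maxHeartbeats 2000000 in
/-- Impossibility: for `|X| > 2`, no `ε·d_D`-private channel is universally
`ℓ`-optimal for a loss function `ℓ` that is strictly monotone wrt some metric. -/
theorem no_universally_optimal_strictMono_discrete
    {X W : Type} [Fintype X] [Nonempty X] [Fintype W] [Nonempty W]
    (hcard : 2 < Fintype.card X) (ε : ℝ) (hε : 0 < ε)
    (ℓ : W → X → ℝ)
    (d : X → X → ℝ) (hd : IsMetric d)
    (α : W → X) (hα : Function.Bijective α)
    (m : ℝ → ℝ) (hm : StrictMono m)
    (hℓ : ∀ w x, ℓ w x = m (d (α w) x)) :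
    ¬ ∃ (Y : Type) (_ : Fintype Y) (_ : Nonempty Y) (M : X → Y → ℝ),
        IsChannel M ∧ IsPrivateD ε M ∧ UnivOptimalD ε M ℓ := by
  classical
  rintro ⟨Y, instY, instNeY, M, hMc, hMp, hMopt⟩
  set e := Real.exp ε with hedef
  have he : 1 < e := by
    have := Real.exp_lt_exp.2 hε
    rwa [Real.exp_zero] at this
  have he0 : (0:ℝ) < e := by linarith
  have h1e : (0:ℝ) < 1 + e := by linarith
  set C := m 0 with hC
  have hLL_self : ∀ (w : W) (x : X), α w = x → ℓ w x - C = 0 := by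
    intro w x h
    rw [hℓ, h, hd.1, sub_self]
  have hLL_pos : ∀ (w : W) (x : X), α w ≠ x → 0 < ℓ w x - C := by
    intro w x h
    rw [hℓ]
    exact sub_pos.mpr (hm (hd.2.1 _ _ h))
  have hLL_nonneg : ∀ (w : W) (x : X), 0 ≤ ℓ w x - C := by
    intro w x
    by_cases h : α w = x
    · rw [hLL_self w x h]
    · exact le_of_lt (hLL_pos w x h)
  obtain ⟨a, b, hab, hdmin⟩ : ∃ a b : X, a ≠ b ∧ ∀ x x' : X, x ≠ x' → d a b ≤ d x x' := by
    obtain ⟨x0, y0, hxy⟩ := (Fintype.one_lt_card_iff (α := X)).mp (by omega)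
    obtain ⟨pr0, hmem, hminp⟩ := Finset.exists_min_image
      (univ.filter fun pq : X × X => pq.1 ≠ pq.2) (fun pq => d pq.1 pq.2)
      ⟨(x0, y0), by simp [hxy]⟩
    refine ⟨pr0.1, pr0.2, (Finset.mem_filter.mp hmem).2, fun x x' h => ?_⟩
    exact hminp (x, x') (by simp [h])
  obtain ⟨c, hca, hcb⟩ : ∃ c : X, c ≠ a ∧ c ≠ b := by
    by_contra h
    push_neg at h
    have hsub : (univ : Finset X) ⊆ {a, b} := by
      intro x _
      rcases eq_or_ne x a with h1 | h1
      · simp [h1]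
      · simp [h x h1]
    have h3 := Finset.card_le_card hsub
    have h2 : ({a, b} : Finset X).card ≤ 2 :=
      (Finset.card_insert_le _ _).trans (by simp)
    rw [Finset.card_univ] at h3
    omega
  obtain ⟨wa, hwa⟩ := hα.2 a
  obtain ⟨wb, hwb⟩ := hα.2 b
  set Lab := ℓ wa b - C with hLabdef
  have hLab_pos : 0 < Lab := hLL_pos wa b (by rw [hwa]; exact hab)
  have hsymm : d b a = d a b := hd.2.2.1 b a
  have hLL_ge : ∀ (w : W) (x : X), α w ≠ x → Lab ≤ ℓ w x - C := by
    intro w x h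
    rw [hLabdef, hℓ wa b, hℓ w x, hwa]
    have h1 : d a b ≤ d (α w) x := hdmin _ _ h
    exact sub_le_sub_right (hm.le_iff_le.mpr h1) C
  -- Step 1: column structure on the minimal pair (a,b)
  have hstep1 : ∀ y, M b y = e * M a y ∨ M a y = e * M b y := by
    have hprior := NoUO.pr_prior (X := X) hab (p := 1/2) (q := 1/2)
      (by norm_num) (by norm_num) (by norm_num)
    have hopt := hMopt Bool (NoUO.RR e a) (NoUO.RR_channel he a)
        (by rw [hedef]; exact NoUO.RR_private hε a) _ hprior
    rw [NoUO.postLoss_pair ℓ C hab (by norm_num) M hMc.2,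
        NoUO.postLoss_RR ℓ C hab he0 (by norm_num)] at hopt
    have hub1 : NoUO.G ℓ C a b ((1/2 : ℝ)*e) (1/2) ≤ (1/2) * Lab := by
      have hle := NoUO.G_le ℓ C a b wa ((1/2 : ℝ)*e) (1/2)
      rw [hLL_self wa a hwa] at hle
      have : ℓ wa b - C = Lab := hLabdef.symm
      linarith [hle]
    have hub2 : NoUO.G ℓ C a b (1/2 : ℝ) ((1/2)*e) ≤ (1/2) * Lab := by
      have hle := NoUO.G_le ℓ C a b wb (1/2 : ℝ) ((1/2)*e)
      rw [hLL_self wb b hwb] at hle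
      have hLba : ℓ wb a - C = Lab := by
        rw [hLabdef, hℓ wb a, hℓ wa b, hwa, hwb, hsymm]
      rw [hLba] at hle
      linarith [hle]
    have hGy : ∀ y, NoUO.G ℓ C a b ((1/2 : ℝ) * M a y) ((1/2 : ℝ) * M b y)
        = (1/2) * NoUO.G ℓ C a b (M a y) (M b y) :=
      fun y => NoUO.G_smul ℓ C a b (by norm_num) _ _
    have hlow : ∀ y, Lab * min (M a y) (M b y) ≤ NoUO.G ℓ C a b (M a y) (M b y) := by
      intro y
      apply Finset.le_inf'
      intro w _
      have hmint : min (M a y) (M b y) ≤ M a y := min_le_left _ _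
      have hmins : min (M a y) (M b y) ≤ M b y := min_le_right _ _
      by_cases h1 : α w = a
      · have hz := hLL_self w a h1
        have hLb : ℓ w b - C = Lab := by
          rw [hLabdef, hℓ w b, hℓ wa b, h1, hwa]
        rw [hz, hLb]
        have := mul_le_mul_of_nonneg_left hmins hLab_pos.le
        linarith
      · by_cases h2 : α w = b
        · have hz := hLL_self w b h2
          have hLa : ℓ w a - C = Lab := by
            rw [hLabdef, hℓ w a, hℓ wa b, h2, hwa, hsymm]
          rw [hz, hLa]
          have := mul_le_mul_of_nonneg_left hmint hLab_pos.le
          linarith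
        · have g1 := mul_le_mul_of_nonneg_left (hLL_ge w a h1) (hMc.1 a y)
          have g2 := mul_nonneg (hMc.1 b y) (hLL_nonneg w b)
          have g3 := mul_le_mul_of_nonneg_left hmint hLab_pos.le
          linarith
    have hmin_lb : ∀ y, (M a y + M b y) / (1+e) ≤ min (M a y) (M b y) := by
      intro y
      have p1 := hMp a b y hab
      have p2 := hMp b a y hab.symm
      rw [← hedef] at p1 p2
      rcases le_total (M a y) (M b y) with h | h
      · rw [min_eq_left h, div_le_iff₀ h1e]
        nlinarith
      · rw [min_eq_right h, div_le_iff₀ h1e]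
        nlinarith
    -- sum computations
    have hTsum : ∑ y, Lab * ((M a y + M b y) / (1+e)) = 2 * Lab / (1+e) := by
      rw [← Finset.mul_sum, ← Finset.sum_div, Finset.sum_add_distrib, hMc.2 a, hMc.2 b]
      ring
    have hS_le : ∑ y, Lab * min (M a y) (M b y)
        ≤ ∑ y, NoUO.G ℓ C a b (M a y) (M b y) :=
      Finset.sum_le_sum fun y _ => hlow y
    have hG_le : ∑ y, NoUO.G ℓ C a b (M a y) (M b y) ≤ 2 * Lab / (1+e) := by
      have h1 : (∑ y, NoUO.G ℓ C a b ((1/2 : ℝ) * M a y) ((1/2 : ℝ) * M b y))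
          = (1/2) * ∑ y, NoUO.G ℓ C a b (M a y) (M b y) := by
        rw [Finset.mul_sum]
        exact Finset.sum_congr rfl fun y _ => hGy y
      have h2 : (1/(1+e)) * (NoUO.G ℓ C a b ((1/2 : ℝ)*e) (1/2)
          + NoUO.G ℓ C a b (1/2 : ℝ) ((1/2)*e)) ≤ (1/(1+e)) * Lab := by
        apply mul_le_mul_of_nonneg_left _ (by positivity)
        linarith
      rw [h1] at hopt
      have h3 : (1/2) * (∑ y, NoUO.G ℓ C a b (M a y) (M b y)) ≤ (1/(1+e)) * Lab := by
        linarith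
      have h4 := mul_le_mul_of_nonneg_left h3 h1e.le
      have h5 : (1+e) * ((1/(1+e)) * Lab) = Lab := by field_simp
      rw [h5] at h4
      rw [le_div_iff₀ h1e]
      linarith [h4]
    have hTS : ∑ y, Lab * ((M a y + M b y) / (1+e))
        = ∑ y, Lab * min (M a y) (M b y) := by
      apply le_antisymm
      · exact Finset.sum_le_sum fun y _ =>
          mul_le_mul_of_nonneg_left (hmin_lb y) hLab_pos.le
      · rw [hTsum]
        exact hS_le.trans hG_le
    have hpt := (Finset.sum_eq_sum_iff_of_le
      (fun y _ => mul_le_mul_of_nonneg_left (hmin_lb y) hLab_pos.le)).mp hTS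
    intro y
    have heqy := hpt y (Finset.mem_univ y)
    have heq2 : (M a y + M b y) / (1+e) = min (M a y) (M b y) :=
      mul_left_cancel₀ hLab_pos.ne' heqy
    rw [div_eq_iff (ne_of_gt h1e)] at heq2
    rcases le_total (M a y) (M b y) with h | h
    · rw [min_eq_left h] at heq2
      left; nlinarith
    · rw [min_eq_right h] at heq2
      right; nlinarith
  -- Step 2/3: produce a pair with the functional equation
  have main : ∃ x1 x2 : X, x1 ≠ x2 ∧ ∀ p : ℝ, 0 < p → p < 1 →
      NoUO.G ℓ C x1 x2 (p*e) (1-p) + NoUO.G ℓ C x1 x2 p ((1-p)*e)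
        = (1+e) * NoUO.G ℓ C x1 x2 p (1-p) := by
    by_cases hint : ∃ y, M c y < e * M a y ∧ M a y < e * M c y
    · -- the pair (a,c)
      obtain ⟨y0, hy0⟩ := hint
      refine ⟨a, c, hca.symm, ?_⟩
      intro p hp hp1
      have hq0 : 0 < 1 - p := by linarith
      have hpq : p + (1-p) = 1 := by ring
      have hprior := NoUO.pr_prior (X := X) hca.symm hp.le hq0.le hpq
      have hopt := hMopt Bool (NoUO.RR e a) (NoUO.RR_channel he a)
          (by rw [hedef]; exact NoUO.RR_private hε a) _ hprior
      rw [NoUO.postLoss_pair ℓ C hca.symm hpq M hMc.2,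
          NoUO.postLoss_RR ℓ C hca.symm he0 hpq] at hopt
      have he2 : (0:ℝ) < e^2 - 1 := by nlinarith
      set lam := fun y : Y => (e * M a y - M c y) / (e^2 - 1) with hlam
      set mu := fun y : Y => (e * M c y - M a y) / (e^2 - 1) with hmu
      have hlam0 : ∀ y, 0 ≤ lam y := by
        intro y
        apply div_nonneg _ he2.le
        have := hMp c a y hca
        rw [← hedef] at this
        linarith
      have hmu0 : ∀ y, 0 ≤ mu y := by
        intro y
        apply div_nonneg _ he2.le
        have := hMp a c y hca.symm
        rw [← hedef] at this
        linarith
      have hdec1 : ∀ y, p * M a y = lam y * (p*e) + mu y * p := by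
        intro y
        rw [hlam, hmu]
        field_simp
        ring
      have hdec2 : ∀ y, (1-p) * M c y = lam y * (1-p) + mu y * ((1-p)*e) := by
        intro y
        rw [hlam, hmu]
        field_simp
        ring
      have hper : ∀ y, lam y * NoUO.G ℓ C a c (p*e) (1-p)
          + mu y * NoUO.G ℓ C a c p ((1-p)*e)
          ≤ NoUO.G ℓ C a c (p * M a y) ((1-p) * M c y) := by
        intro y
        rw [hdec1 y, hdec2 y]
        exact NoUO.G_superadd ℓ C a c (hlam0 y) (hmu0 y) _ _ _ _
      have hsumlam : ∑ y, lam y = 1/(1+e) := by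
        rw [hlam]
        rw [← Finset.sum_div, Finset.sum_sub_distrib, ← Finset.mul_sum,
          hMc.2 a, hMc.2 c, mul_one]
        rw [div_eq_div_iff he2.ne' h1e.ne']
        ring
      have hsummu : ∑ y, mu y = 1/(1+e) := by
        rw [hmu]
        rw [← Finset.sum_div, Finset.sum_sub_distrib, ← Finset.mul_sum,
          hMc.2 c, hMc.2 a, mul_one]
        rw [div_eq_div_iff he2.ne' h1e.ne']
        ring
      have hlowsum : (NoUO.G ℓ C a c (p*e) (1-p) + NoUO.G ℓ C a c p ((1-p)*e)) / (1+e)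
          = ∑ y, (lam y * NoUO.G ℓ C a c (p*e) (1-p)
              + mu y * NoUO.G ℓ C a c p ((1-p)*e)) := by
        rw [Finset.sum_add_distrib, ← Finset.sum_mul, ← Finset.sum_mul,
          hsumlam, hsummu]
        ring
      have hsumeq : ∑ y, (lam y * NoUO.G ℓ C a c (p*e) (1-p)
            + mu y * NoUO.G ℓ C a c p ((1-p)*e))
          = ∑ y, NoUO.G ℓ C a c (p * M a y) ((1-p) * M c y) := by
        apply le_antisymm (Finset.sum_le_sum fun y _ => hper y)
        rw [← hlowsum]
        have hx : ∑ y, NoUO.G ℓ C a c (p * M a y) ((1-p) * M c y)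
            ≤ (1/(1+e)) * (NoUO.G ℓ C a c (p*e) (1-p)
              + NoUO.G ℓ C a c p ((1-p)*e)) := by linarith [hopt]
        have hy' : (1/(1+e)) * (NoUO.G ℓ C a c (p*e) (1-p) + NoUO.G ℓ C a c p ((1-p)*e))
            = (NoUO.G ℓ C a c (p*e) (1-p) + NoUO.G ℓ C a c p ((1-p)*e)) / (1+e) := by
          ring
        rw [hy'] at hx
        exact hx
      have hpt := (Finset.sum_eq_sum_iff_of_le (fun y _ => hper y)).mp hsumeq
      have heqy0 := hpt y0 (Finset.mem_univ y0)
      have hl0 : 0 < lam y0 := by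
        rw [hlam]
        apply div_pos _ he2
        linarith [hy0.1]
      have hm0 : 0 < mu y0 := by
        rw [hmu]
        apply div_pos _ he2
        linarith [hy0.2]
      have heq0 : NoUO.G ℓ C a c (lam y0 * (p*e) + mu y0 * p)
          (lam y0 * (1-p) + mu y0 * ((1-p)*e))
          = lam y0 * NoUO.G ℓ C a c (p*e) (1-p)
            + mu y0 * NoUO.G ℓ C a c p ((1-p)*e) := by
        rw [← hdec1 y0, ← hdec2 y0]
        exact heqy0.symm
      have hconc := NoUO.G_interior ℓ C a c hl0 hm0 heq0
      have harg : NoUO.G ℓ C a c (p*e + p) ((1-p) + (1-p)*e)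
          = (1+e) * NoUO.G ℓ C a c p (1-p) := by
        rw [show p*e + p = (1+e)*p from by ring,
          show (1-p) + (1-p)*e = (1+e)*(1-p) from by ring]
        exact NoUO.G_smul ℓ C a c h1e.le p (1-p)
      rw [harg] at hconc
      linarith [hconc]
    · -- rows b and c coincide; use the pair (b,c)
      push_neg at hint
      have hbc : ∀ y, M c y = M b y := by
        intro y
        have h1 := hstep1 y
        have p1 := hMp c a y hca
        have p2 := hMp a c y hca.symm
        have p3 := hMp c b y hcb
        have p4 := hMp b c y hcb.symm
        rw [← hedef] at p1 p2 p3 p4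
        have h2 : M c y = e * M a y ∨ M a y = e * M c y := by
          by_cases hlt : M c y < e * M a y
          · right
            have := hint y hlt
            linarith
          · left
            linarith
        have hbnn := hMc.1 b y
        have hcnn := hMc.1 c y
        have hann := hMc.1 a y
        rcases h2 with h2 | h2 <;> rcases h1 with h1 | h1 <;> nlinarith
      refine ⟨b, c, hcb.symm, ?_⟩
      intro p hp hp1
      have hq0 : 0 < 1 - p := by linarith
      have hpq : p + (1-p) = 1 := by ring
      have hprior := NoUO.pr_prior (X := X) hcb.symm hp.le hq0.le hpq
      have hopt := hMopt Bool (NoUO.RR e b) (NoUO.RR_channel he b)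
          (by rw [hedef]; exact NoUO.RR_private hε b) _ hprior
      rw [NoUO.postLoss_pair ℓ C hcb.symm hpq M hMc.2,
          NoUO.postLoss_RR ℓ C hcb.symm he0 hpq] at hopt
      have hLHS : ∑ y, NoUO.G ℓ C b c (p * M b y) ((1-p) * M c y)
          = NoUO.G ℓ C b c p (1-p) := by
        have hyy : ∀ y, NoUO.G ℓ C b c (p * M b y) ((1-p) * M c y)
            = M b y * NoUO.G ℓ C b c p (1-p) := by
          intro y
          rw [hbc y, show p * M b y = M b y * p from by ring,
            show (1-p) * M b y = M b y * (1-p) from by ring]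
          exact NoUO.G_smul ℓ C b c (hMc.1 b y) p (1-p)
        rw [Finset.sum_congr rfl fun y _ => hyy y, ← Finset.sum_mul, hMc.2 b, one_mul]
      rw [hLHS] at hopt
      have hsup : NoUO.G ℓ C b c (p*e) (1-p) + NoUO.G ℓ C b c p ((1-p)*e)
          ≤ (1+e) * NoUO.G ℓ C b c p (1-p) := by
        have hsa := NoUO.G_superadd ℓ C b c zero_le_one zero_le_one (p*e) (1-p) p ((1-p)*e)
        have harg : NoUO.G ℓ C b c (1*(p*e) + 1*p) (1*(1-p) + 1*((1-p)*e))
            = (1+e) * NoUO.G ℓ C b c p (1-p) := by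
          rw [show 1*(p*e) + 1*p = (1+e)*p from by ring,
            show 1*(1-p) + 1*((1-p)*e) = (1+e)*(1-p) from by ring]
          exact NoUO.G_smul ℓ C b c h1e.le p (1-p)
        rw [harg] at hsa
        linarith
      have hopt' : NoUO.G ℓ C b c p (1-p)
          ≤ (1/(1+e)) * (NoUO.G ℓ C b c (p*e) (1-p) + NoUO.G ℓ C b c p ((1-p)*e)) :=
        by linarith [hopt]
      have hm1 := mul_le_mul_of_nonneg_left hopt' h1e.le
      have hcalc : (1+e) * ((1/(1+e)) * (NoUO.G ℓ C b c (p*e) (1-p)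
          + NoUO.G ℓ C b c p ((1-p)*e)))
          = NoUO.G ℓ C b c (p*e) (1-p) + NoUO.G ℓ C b c p ((1-p)*e) := by
        field_simp
      rw [hcalc] at hm1
      linarith
  -- Step 4: the functional equation is impossible
  obtain ⟨x1, x2, h12, hE⟩ := main
  obtain ⟨w1, hw1⟩ := hα.2 x1
  obtain ⟨w2, hw2⟩ := hα.2 x2
  set K1 := ℓ w1 x2 - C with hK1
  set K2 := ℓ w2 x1 - C with hK2
  have hK1p : 0 < K1 := hLL_pos w1 x2 (by rw [hw1]; exact h12)
  have hK2p : 0 < K2 := hLL_pos w2 x1 (by rw [hw2]; exact h12.symm)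
  set K := max K1 K2 with hK
  have hf0 : ∀ r : ℝ, 0 < r → 0 ≤ NoUO.G ℓ C x1 x2 r 1 := by
    intro r hr
    apply Finset.le_inf'
    intro w _
    have n1 := hLL_nonneg w x1
    have n2 := hLL_nonneg w x2
    have := mul_nonneg hr.le n1
    linarith
  have hfK : ∀ r : ℝ, 0 < r → NoUO.G ℓ C x1 x2 r 1 ≤ K := by
    intro r hr
    have hle := NoUO.G_le ℓ C x1 x2 w1 r 1
    rw [hLL_self w1 x1 hw1] at hle
    have h1 : ℓ w1 x2 - C = K1 := hK1.symm
    have h2 : K1 ≤ K := le_max_left _ _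
    nlinarith
  have hflin : ∀ r : ℝ, 0 < r → NoUO.G ℓ C x1 x2 r 1 ≤ r * K := by
    intro r hr
    have hle := NoUO.G_le ℓ C x1 x2 w2 r 1
    rw [hLL_self w2 x2 hw2] at hle
    have h1 : ℓ w2 x1 - C = K2 := hK2.symm
    have h2 := mul_le_mul_of_nonneg_left (le_max_right K1 K2) hr.le
    nlinarith
  have hf1 : 0 < NoUO.G ℓ C x1 x2 1 1 := by
    obtain ⟨w, -, hw⟩ := Finset.exists_mem_eq_inf' (univ_nonempty (α := W))
      (fun w => (1:ℝ) * (ℓ w x1 - C) + 1 * (ℓ w x2 - C))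
    have hGdef : NoUO.G ℓ C x1 x2 1 1
        = (1:ℝ) * (ℓ w x1 - C) + 1 * (ℓ w x2 - C) := hw
    rw [hGdef]
    by_cases h : α w = x1
    · have := hLL_self w x1 h
      have hpos := hLL_pos w x2 (by rw [h]; exact h12)
      linarith
    · have hpos := hLL_pos w x1 h
      have := hLL_nonneg w x2
      linarith
  have heqf : ∀ r : ℝ, 0 < r → NoUO.G ℓ C x1 x2 (e*r) 1
      + e * NoUO.G ℓ C x1 x2 (r/e) 1 = (1+e) * NoUO.G ℓ C x1 x2 r 1 := by
    intro r hr
    have hr1 : (0:ℝ) < r + 1 := by linarith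
    set p := r / (r+1) with hp
    have hp0 : 0 < p := div_pos hr hr1
    have hp1 : p < 1 := by
      rw [hp, div_lt_one hr1]
      linarith
    have hEp := hE p hp0 hp1
    have k1 : (r+1) * NoUO.G ℓ C x1 x2 (p*e) (1-p) = NoUO.G ℓ C x1 x2 (e*r) 1 := by
      calc (r+1) * NoUO.G ℓ C x1 x2 (p*e) (1-p)
          = NoUO.G ℓ C x1 x2 ((r+1)*(p*e)) ((r+1)*(1-p)) :=
            (NoUO.G_smul ℓ C x1 x2 hr1.le _ _).symm
        _ = NoUO.G ℓ C x1 x2 (e*r) 1 := by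
            rw [show (r+1)*(p*e) = e*r from by rw [hp]; field_simp; try ring,
              show (r+1)*(1-p) = 1 from by rw [hp]; field_simp; ring]
    have k2 : (r+1) * NoUO.G ℓ C x1 x2 p ((1-p)*e) = e * NoUO.G ℓ C x1 x2 (r/e) 1 := by
      calc (r+1) * NoUO.G ℓ C x1 x2 p ((1-p)*e)
          = NoUO.G ℓ C x1 x2 ((r+1)*p) ((r+1)*((1-p)*e)) :=
            (NoUO.G_smul ℓ C x1 x2 hr1.le _ _).symm
        _ = NoUO.G ℓ C x1 x2 r e := by
            rw [show (r+1)*p = r from by rw [hp]; field_simp,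
              show (r+1)*((1-p)*e) = e from by rw [hp]; field_simp; try ring]
        _ = e * NoUO.G ℓ C x1 x2 (r/e) 1 := by
            have := NoUO.G_smul ℓ C x1 x2 (c := e) he0.le (r/e) 1
            rw [show e*(r/e) = r from by field_simp, mul_one] at this
            exact this
    have k3 : (r+1) * NoUO.G ℓ C x1 x2 p (1-p) = NoUO.G ℓ C x1 x2 r 1 := by
      calc (r+1) * NoUO.G ℓ C x1 x2 p (1-p)
          = NoUO.G ℓ C x1 x2 ((r+1)*p) ((r+1)*(1-p)) :=
            (NoUO.G_smul ℓ C x1 x2 hr1.le _ _).symm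
        _ = NoUO.G ℓ C x1 x2 r 1 := by
            rw [show (r+1)*p = r from by rw [hp]; field_simp,
              show (r+1)*(1-p) = 1 from by rw [hp]; field_simp; ring]
    linear_combination (r+1) * hEp - k1 - k2 + (1+e) * k3
  exact NoUO.no_funeq e K he (fun r => NoUO.G ℓ C x1 x2 r 1) hf0 hfK hflin hf1 heqf
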